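/- arXiv:1204.6286 — 2 statements merged into one kernel-verified Lean document; each statement's English description precedes it below -/
import Mathlib

section
/- The function f(x,y) = 2·φ(x)·φ(y)·Φ(λxy), where φ and Φ are the standard normal pdf and cdf, integrates to 1 over ℝ², i.e., it is a probability density function for every real λ. -/
open Real MeasureTheory

/-- Standard normal pdf. -/
noncomputable def phi (x : ℝ) : ℝ := (Real.sqrt (2 * Real.pi))⁻¹ * Real.exp (-x ^ 2 / 2)

/-- Standard normal cdf. -/
noncomputable def Phi (x : ℝ) : ℝ := ∫ t in Set.Iic x, phi t

lemma phi_nonneg (x : ℝ) : 0 ≤ phi x := by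
  unfold phi
  positivity

lemma phi_eq (x : ℝ) : phi x = (Real.sqrt (2 * Real.pi))⁻¹ * Real.exp (-(1/2) * x ^ 2) := by
  unfold phi; ring_nf

lemma integrable_phi : Integrable phi := by
  simp only [funext phi_eq]
  exact (integrable_exp_neg_mul_sq (by norm_num : (0:ℝ) < 1/2)).const_mul _

lemma integral_phi : ∫ x, phi x = 1 := by
  simp only [funext phi_eq]
  rw [integral_const_mul, integral_gaussian]
  rw [div_div_eq_mul_div, div_one]
  rw [mul_comm π 2, inv_mul_cancel₀]
  positivity

lemma phi_neg (x : ℝ) : phi (-x) = phi x := by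
  unfold phi; rw [neg_sq]

lemma phi_continuous : Continuous phi := by
  unfold phi; continuity

lemma Phi_add_Phi_neg (x : ℝ) : Phi x + Phi (-x) = 1 := by
  have h : (∫ t in Set.Iic (-x), phi t) = ∫ t in Set.Ioi x, phi t := by
    have h0 := integral_comp_neg_Iic (-x) phi
    rw [neg_neg] at h0
    simp only [phi_neg] at h0
    exact h0
  unfold Phi
  rw [h, intervalIntegral.integral_Iic_add_Ioi integrable_phi.integrableOn integrable_phi.integrableOn,
    integral_phi]

lemma Phi_nonneg (x : ℝ) : 0 ≤ Phi x :=
  integral_nonneg fun t => phi_nonneg t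

lemma Phi_le_one (x : ℝ) : Phi x ≤ 1 := by
  have := Phi_add_Phi_neg x
  have := Phi_nonneg (-x)
  linarith

lemma Phi_monotone : Monotone Phi := fun a b hab => by
  apply setIntegral_mono_set integrable_phi.integrableOn
  · exact Filter.Eventually.of_forall fun t => phi_nonneg t
  · exact Filter.Eventually.of_forall fun t (ht : t ≤ a) => le_trans ht hab

lemma Phi_measurable : Measurable Phi := Phi_monotone.measurable

lemma integrable_f (l : ℝ) :
    Integrable (fun p : ℝ × ℝ => 2 * phi p.1 * phi p.2 * Phi (l * p.1 * p.2)) := by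
  have hg : Integrable (fun p : ℝ × ℝ => 2 * (phi p.1 * phi p.2)) := by
    have : Integrable (fun p : ℝ × ℝ => phi p.1 * phi p.2) :=
      integrable_phi.mul_prod integrable_phi
    exact this.const_mul 2
  apply hg.mono
  · apply AEStronglyMeasurable.mul
    · apply Continuous.aestronglyMeasurable
      exact (continuous_const.mul (phi_continuous.comp continuous_fst)).mul
        (phi_continuous.comp continuous_snd)
    · apply Measurable.aestronglyMeasurable
      exact Phi_measurable.comp
        ((measurable_const.mul measurable_fst).mul measurable_snd)
  · refine Filter.Eventually.of_forall fun p => ?_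
    have h1 : 0 ≤ phi p.1 := phi_nonneg _
    have h2 : 0 ≤ phi p.2 := phi_nonneg _
    have h3 : 0 ≤ Phi (l * p.1 * p.2) := Phi_nonneg _
    have h4 : Phi (l * p.1 * p.2) ≤ 1 := Phi_le_one _
    rw [Real.norm_eq_abs, Real.norm_eq_abs, abs_of_nonneg (by positivity),
      abs_of_nonneg (by positivity)]
    calc 2 * phi p.1 * phi p.2 * Phi (l * p.1 * p.2)
        ≤ 2 * phi p.1 * phi p.2 * 1 := by
          apply mul_le_mul_of_nonneg_left h4; positivity
      _ = 2 * (phi p.1 * phi p.2) := by ring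

theorem skew_bivariate_normal_integrates_to_one (l : ℝ) :
    ∫ p : ℝ × ℝ, 2 * phi p.1 * phi p.2 * Phi (l * p.1 * p.2) = 1 := by
  set f : ℝ × ℝ → ℝ := fun p => 2 * phi p.1 * phi p.2 * Phi (l * p.1 * p.2) with hf
  have hT : MeasurePreserving (fun p : ℝ × ℝ => (-p.1, p.2)) volume volume :=
    (Measure.measurePreserving_neg (volume : Measure ℝ)).prod (MeasurePreserving.id _)
  have hint := integrable_f l
  have hemb : MeasurableEmbedding (fun p : ℝ × ℝ => (-p.1, p.2)) :=
    (MeasurableEquiv.prodCongr (Homeomorph.neg ℝ).toMeasurableEquiv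
      (MeasurableEquiv.refl ℝ)).measurableEmbedding
  have hintT : Integrable (fun p : ℝ × ℝ => f (-p.1, p.2)) :=
    (hT.integrable_comp_emb hemb).mpr hint
  have key : ∫ p : ℝ × ℝ, f p = ∫ p : ℝ × ℝ, f (-p.1, p.2) :=
    (hT.integral_comp hemb f).symm
  have sum : (∫ p : ℝ × ℝ, f p) + ∫ p : ℝ × ℝ, f p = 2 := by
    nth_rewrite 2 [key]
    rw [← integral_add hint hintT]
    have : ∀ p : ℝ × ℝ, f p + f (-p.1, p.2) = 2 * (phi p.1 * phi p.2) := by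
      intro p
      simp only [hf, phi_neg]
      have h := Phi_add_Phi_neg (l * p.1 * p.2)
      have : Phi (l * -p.1 * p.2) = Phi (-(l * p.1 * p.2)) := by ring_nf
      rw [this]
      linear_combination (2 * phi p.1 * phi p.2) * h
    simp only [hf] at this ⊢
    simp only [this]
    rw [integral_const_mul]
    have : ∫ p : ℝ × ℝ, phi p.1 * phi p.2 = (∫ x, phi x) * ∫ x, phi x := by
      rw [show (volume : Measure (ℝ × ℝ)) = (volume : Measure ℝ).prod volume from rfl]
      exact integral_prod_mul phi phi
    rw [this, integral_phi]; norm_num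
  linarith
end

section
/- If Z is a standard normal random variable, α > 0, β > 0, and T = β·(αZ/2 + √((αZ/2)² + 1))², then T has density f_T(t) = t^{-3/2}(t+β)/(2√(2π)·α·√β) · exp(−(1/(2α²))(t/β + β/t − 2)) on (0,∞); i.e., this function is the density of the pushforward of the standard normal law under z ↦ β(αz/2 + √((αz/2)²+1))². -/
open Real MeasureTheory

/-- Birnbaum–Saunders density with shape α and scale β. -/
noncomputable def fBS (a b t : ℝ) : ℝ :=
  t ^ (-(3:ℝ)/2) * (t + b) / (2 * Real.sqrt (2 * Real.pi) * a * Real.sqrt b) *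
    Real.exp (-(1/(2 * a ^ 2)) * (t / b + b / t - 2))

/-- The inverse transformation. -/
noncomputable def BSinv (a b t : ℝ) : ℝ := (Real.sqrt (t / b) - Real.sqrt (b / t)) / a

/-- The forward transformation. -/
noncomputable def BSg (a b z : ℝ) : ℝ :=
  b * (a * z / 2 + Real.sqrt ((a * z / 2) ^ 2 + 1)) ^ 2

lemma sqrt_sq_add_one_gt (u : ℝ) : -u < Real.sqrt (u ^ 2 + 1) := by
  have h1 : |u| < Real.sqrt (u ^ 2 + 1) := by
    rw [← Real.sqrt_sq_eq_abs]
    exact Real.sqrt_lt_sqrt (sq_nonneg u) (by linarith)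
  calc -u ≤ |u| := neg_le_abs u
    _ < _ := h1

lemma base_pos (u : ℝ) : 0 < u + Real.sqrt (u ^ 2 + 1) := by
  have := sqrt_sq_add_one_gt u; linarith

lemma BSg_pos {a b : ℝ} (hb : 0 < b) (z : ℝ) : 0 < BSg a b z :=
  mul_pos hb (pow_pos (base_pos _) 2)

lemma BSinv_BSg {a b : ℝ} (ha : 0 < a) (hb : 0 < b) (z : ℝ) : BSinv a b (BSg a b z) = z := by
  set u := a * z / 2 with hu
  set s := Real.sqrt (u ^ 2 + 1) with hs
  have hs2 : s ^ 2 = u ^ 2 + 1 := Real.sq_sqrt (by positivity)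
  have hpos : 0 < u + s := base_pos u
  have habs : |u| < s := by
    rw [hs, ← Real.sqrt_sq_eq_abs]; exact Real.sqrt_lt_sqrt (sq_nonneg u) (by linarith)
  have hsu : 0 < s - u := by have := neg_abs_le u; have := le_abs_self u; linarith
  have hB : BSg a b z = b * (u + s) ^ 2 := by rw [BSg, ← hu, ← hs]
  have hmul : (s - u) * (u + s) = 1 := by linear_combination hs2
  have h1 : BSg a b z / b = (u + s) ^ 2 := by
    rw [hB, mul_comm, mul_div_assoc, div_self hb.ne', mul_one]
  have h2 : b / BSg a b z = (s - u) ^ 2 := by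
    rw [hB, div_eq_iff (by positivity)]
    have hmul2 : (s - u) ^ 2 * (u + s) ^ 2 = 1 := by
      rw [← mul_pow, hmul, one_pow]
    linear_combination -b * hmul2
  rw [BSinv, h1, h2, Real.sqrt_sq hpos.le, Real.sqrt_sq hsu.le]
  field_simp [hu]
  ring

lemma BSg_BSinv {a b : ℝ} (ha : 0 < a) (hb : 0 < b) {t : ℝ} (ht : 0 < t) :
    BSg a b (BSinv a b t) = t := by
  set r := Real.sqrt (t / b) with hr
  have hrpos : 0 < r := Real.sqrt_pos.mpr (by positivity)
  have hr2 : r ^ 2 = t / b := Real.sq_sqrt (by positivity)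
  have hbt : Real.sqrt (b / t) = 1 / r := by
    rw [hr, show b / t = (t / b)⁻¹ by rw [inv_div], Real.sqrt_inv, one_div]
  have hbinv : BSinv a b t = (r - 1 / r) / a := by rw [BSinv, ← hr, hbt]
  rw [BSg, hbinv]
  have hAr : a * ((r - 1 / r) / a) / 2 = (r - 1 / r) / 2 := by field_simp
  have hsq : ((r - 1 / r) / 2) ^ 2 + 1 = ((r + 1 / r) / 2) ^ 2 := by
    field_simp; ring
  rw [hAr, hsq, Real.sqrt_sq (by positivity)]
  have h5 : (r - 1 / r) / 2 + (r + 1 / r) / 2 = r := by ring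
  rw [h5, hr2]
  field_simp

lemma rpow_neg_three_halves {t : ℝ} (ht : 0 < t) :
    t ^ (-(3:ℝ)/2) = 1 / (t * Real.sqrt t) := by
  rw [show (-(3:ℝ)/2) = -(1 + 1/2) by norm_num, Real.rpow_neg ht.le, Real.rpow_add ht,
    Real.rpow_one, ← Real.sqrt_eq_rpow, one_div]

noncomputable def BSd (a b t : ℝ) : ℝ := t ^ (-(3:ℝ)/2) * (t + b) / (2 * a * Real.sqrt b)

lemma BSd_pos {a b : ℝ} (ha : 0 < a) (hb : 0 < b) {t : ℝ} (ht : 0 < t) : 0 < BSd a b t := by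
  have h1 : 0 < t ^ (-(3:ℝ)/2) := Real.rpow_pos_of_pos ht _
  have h2 : 0 < Real.sqrt b := Real.sqrt_pos.mpr hb
  rw [BSd]; positivity

lemma hasDerivAt_BSinv {a b : ℝ} (ha : 0 < a) (hb : 0 < b) {t : ℝ} (ht : 0 < t) :
    HasDerivAt (BSinv a b) (BSd a b t) t := by
  have htb : t / b ≠ 0 := by positivity
  have hbt : b / t ≠ 0 := by positivity
  have h1 : HasDerivAt (fun t : ℝ => Real.sqrt (t / b))
      (1 / (2 * Real.sqrt (t / b)) * (1 / b)) t :=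
    (Real.hasDerivAt_sqrt htb).comp t ((hasDerivAt_id t).div_const b)
  have h2a : HasDerivAt (fun y : ℝ => b / y) (-b / t ^ 2) t := by
    exact ((hasDerivAt_const t b).div (hasDerivAt_id t) ht.ne').congr_deriv (by simp)
  have h2 : HasDerivAt (fun t : ℝ => Real.sqrt (b / t))
      (1 / (2 * Real.sqrt (b / t)) * (-b / t ^ 2)) t :=
    (Real.hasDerivAt_sqrt hbt).comp t h2a
  have h3 := (h1.sub h2).div_const a
  refine h3.congr_deriv ?_
  have e1 : Real.sqrt (t / b) = Real.sqrt t / Real.sqrt b := Real.sqrt_div ht.le b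
  have e2 : Real.sqrt (b / t) = Real.sqrt b / Real.sqrt t := Real.sqrt_div hb.le t
  rw [BSd, rpow_neg_three_halves ht, e1, e2]
  set st := Real.sqrt t with hstd
  set sb := Real.sqrt b with hsbd
  have hst : 0 < st := Real.sqrt_pos.mpr ht
  have hsb : 0 < sb := Real.sqrt_pos.mpr hb
  have et : t = st ^ 2 := (Real.sq_sqrt ht.le).symm
  have eb : b = sb ^ 2 := (Real.sq_sqrt hb.le).symm
  rw [et, eb]
  field_simp
  ring

lemma aux_alg (X E c d e : ℝ) (hc : c ≠ 0) (hd : d ≠ 0) (he : e ≠ 0) :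
    X / (2 * d * e) * (c⁻¹ * E) = X / (2 * c * d * e) * E := by
  field_simp

lemma density_eq {a b : ℝ} (ha : 0 < a) (hb : 0 < b) {t : ℝ} (ht : 0 < t) :
    |BSd a b t| * phi (BSinv a b t) = fBS a b t := by
  have hd := BSd_pos ha hb ht
  rw [abs_of_pos hd]
  have h1 : (BSinv a b t) ^ 2 = (t / b + b / t - 2) / a ^ 2 := by
    rw [BSinv]
    have e1 : Real.sqrt (t / b) ^ 2 = t / b := Real.sq_sqrt (by positivity)
    have e2 : Real.sqrt (b / t) ^ 2 = b / t := Real.sq_sqrt (by positivity)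
    have e3 : Real.sqrt (t / b) * Real.sqrt (b / t) = 1 := by
      rw [← Real.sqrt_mul (by positivity)]
      rw [show t / b * (b / t) = 1 by field_simp]
      exact Real.sqrt_one
    rw [div_pow, sub_sq, e1, e2]
    linear_combination (-2 / a ^ 2 : ℝ) * e3
  have h2 : -(BSinv a b t) ^ 2 / 2 = -(1 / (2 * a ^ 2)) * (t / b + b / t - 2) := by
    rw [h1]; field_simp
  rw [phi, h2, fBS, BSd]
  have h2p : 0 < Real.sqrt (2 * Real.pi) := Real.sqrt_pos.mpr (by positivity)
  have hsb : 0 < Real.sqrt b := Real.sqrt_pos.mpr hb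
  exact aux_alg _ _ _ _ _ h2p.ne' ha.ne' hsb.ne' 

lemma continuous_BSg (a b : ℝ) : Continuous (BSg a b) := by
  unfold BSg; fun_prop

theorem BS_density_of_transformed_normal (a b : ℝ) (ha : 0 < a) (hb : 0 < b) :
    MeasureTheory.Measure.map
        (fun z : ℝ => b * (a * z / 2 + Real.sqrt ((a * z / 2) ^ 2 + 1)) ^ 2)
        (MeasureTheory.volume.withDensity (fun x => ENNReal.ofReal (phi x)))
      = MeasureTheory.volume.withDensity
          (fun t => ENNReal.ofReal (if 0 < t then fBS a b t else 0)) := by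
  have hgm : Measurable (BSg a b) := (continuous_BSg a b).measurable
  refine Measure.ext fun s hs => ?_
  have hgeq : (fun z : ℝ => b * (a * z / 2 + Real.sqrt ((a * z / 2) ^ 2 + 1)) ^ 2) = BSg a b :=
    rfl
  rw [hgeq, Measure.map_apply hgm hs, withDensity_apply _ (hgm hs), withDensity_apply _ hs]
  have hsm : MeasurableSet (s ∩ Set.Ioi 0) := hs.inter measurableSet_Ioi
  have himg : BSg a b ⁻¹' s = BSinv a b '' (s ∩ Set.Ioi 0) := by
    ext z
    constructor
    · intro hz
      exact ⟨BSg a b z, ⟨hz, BSg_pos hb z⟩, BSinv_BSg ha hb z⟩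
    · rintro ⟨t, ⟨hts, ht0⟩, rfl⟩
      show BSg a b (BSinv a b t) ∈ s
      rw [BSg_BSinv ha hb ht0]; exact hts
  have hderiv : ∀ x ∈ s ∩ Set.Ioi 0,
      HasFDerivWithinAt (BSinv a b) ((1 : ℝ →L[ℝ] ℝ).smulRight (BSd a b x))
        (s ∩ Set.Ioi 0) x := fun x hx =>
    ((hasDerivAt_BSinv ha hb hx.2).hasDerivWithinAt).hasFDerivWithinAt
  have hinj : Set.InjOn (BSinv a b) (s ∩ Set.Ioi 0) := fun x hx y hy hxy => by
    rw [← BSg_BSinv ha hb hx.2, ← BSg_BSinv ha hb hy.2, hxy]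
  rw [himg, lintegral_image_eq_lintegral_abs_det_fderiv_mul volume hsm hderiv hinj]
  simp only [ContinuousLinearMap.smulRight_one_eq_toSpanSingleton, ContinuousLinearMap.det_toSpanSingleton]
  have hL : ∀ x ∈ s ∩ Set.Ioi 0,
      ENNReal.ofReal |BSd a b x| * ENNReal.ofReal (phi (BSinv a b x))
        = ENNReal.ofReal (fBS a b x) := by
    intro x hx
    rw [← ENNReal.ofReal_mul (abs_nonneg _), density_eq ha hb hx.2]
  rw [setLIntegral_congr_fun hsm hL]
  have hind : ∀ x : ℝ, ENNReal.ofReal (if 0 < x then fBS a b x else 0)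
      = Set.indicator (Set.Ioi 0) (fun x => ENNReal.ofReal (fBS a b x)) x := by
    intro x
    by_cases hx : 0 < x <;> simp [Set.indicator, hx]
  simp_rw [hind]
  rw [lintegral_indicator measurableSet_Ioi _, Measure.restrict_restrict measurableSet_Ioi,
    Set.inter_comm]
end
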